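/- Let q be a prime power, f : GF(q^2) → GF(q^2) an additive function, and for m, d ∈ GF(q^2) let t(m,d) be the number of x ∈ GF(q^2) satisfying (mx+d)^q + (mx+d) + f(x)^q + f(x) = x^{q+1}. Then for every fixed m, the multiset { t(m,d) : d ∈ GF(q^2) } does not depend on m; moreover each element of this multiset occurs a multiple of q times. -/

import Mathlib

open Polynomial in
lemma rootbound (q : ℕ) (hq2 : 2 ≤ q) (K : Type) [Field K] [Fintype K] [DecidableEq K] (c : K) :
    (Finset.univ.filter (fun x : K => x ^ q + c * x = 0)).card ≤ q := by
  set P : K[X] := X ^ q + C c * X with hP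
  have hdeg : P.natDegree = q := by
    rw [hP]
    compute_degree!
    · simp [show q ≠ 1 by omega]
    · omega
    · omega
  have hP0 : P ≠ 0 := fun h => by simp [h] at hdeg; omega
  calc (Finset.univ.filter (fun x : K => x ^ q + c * x = 0)).card
      ≤ P.roots.toFinset.card := by
        apply Finset.card_le_card
        intro x hx
        simp only [Finset.mem_filter] at hx
        simp only [Multiset.mem_toFinset, mem_roots, hP0, ne_eq, not_false_iff, true_and, IsRoot.def]
        simp [hP, hx.2]
    _ ≤ Multiset.card P.roots := Multiset.toFinset_card_le _
    _ ≤ P.natDegree := P.card_roots'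
    _ = q := hdeg

lemma trace_fibers (q : ℕ) (K : Type) [Field K] [Fintype K] [DecidableEq K]
    (hq : IsPrimePow q) (hK : Fintype.card K = q ^ 2)
    (hadd : ∀ a b : K, (a + b) ^ q = a ^ q + b ^ q) :
    Finset.univ.val.map (fun x : K => x ^ q + x)
      = q • (Finset.univ.filter (fun z : K => z ^ q = z)).val := by
  have hq2 : 2 ≤ q := hq.two_le
  have hpc : ∀ a : K, (a ^ q) ^ q = a := by
    intro a
    rw [← pow_mul, ← sq, ← hK, FiniteField.pow_card]
  set T : K → K := fun x => x ^ q + x with hT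
  set S : Finset K := Finset.univ.filter (fun z : K => z ^ q = z) with hS
  have hTS : ∀ x : K, T x ∈ S := by
    intro x
    simp only [hS, Finset.mem_filter, Finset.mem_univ, true_and, hT]
    rw [hadd, hpc]
    ring
  have hTadd : ∀ a b : K, T (a + b) = T a + T b := by
    intro a b; simp only [hT]; rw [hadd]; ring
  have hTsub : ∀ a b : K, T (a - b) = T a - T b := by
    intro a b
    have h := hTadd (a - b) b
    simp only [sub_add_cancel] at h
    linear_combination -h
  set κ := (Finset.univ.filter (fun x : K => T x = 0)).card with hκ
  -- all fibers over the image have card κ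
  have hfib : ∀ x₀ : K, (Finset.univ.filter (fun x : K => T x = T x₀)).card = κ := by
    intro x₀
    rw [hκ]
    apply Finset.card_nbij' (fun x => x - x₀) (fun x => x + x₀)
    · intro a ha
      simp only [Finset.mem_coe, Finset.mem_filter, Finset.mem_univ, true_and] at ha ⊢
      rw [hTsub, ha, sub_self]
    · intro a ha
      simp only [Finset.mem_coe, Finset.mem_filter, Finset.mem_univ, true_and] at ha ⊢
      rw [hTadd, ha, zero_add]
    · intro a _; simp
    · intro a _; simp
  set I : Finset K := Finset.univ.image T with hI
  have hcount : Fintype.card K = I.card * κ := by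
    rw [← Finset.card_univ, Finset.card_eq_sum_card_fiberwise
      (f := T) (t := I) (fun x _ => Finset.mem_image_of_mem T (Finset.mem_univ x))]
    rw [Finset.sum_congr rfl (fun y hy => ?_), Finset.sum_const, smul_eq_mul]
    rw [hI, Finset.mem_image] at hy
    obtain ⟨x₀, _, rfl⟩ := hy
    exact hfib x₀
  have hκle : κ ≤ q := by
    have h := rootbound q hq2 K 1
    rw [hκ]
    rw [show (Finset.univ.filter (fun x : K => T x = 0))
        = (Finset.univ.filter (fun x : K => x ^ q + 1 * x = 0)) from
      Finset.filter_congr (fun x _ => by simp [hT])]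
    exact h
  have hSle : S.card ≤ q := by
    have h := rootbound q hq2 K (-1)
    rw [hS]
    rw [show (Finset.univ.filter (fun z : K => z ^ q = z))
        = (Finset.univ.filter (fun x : K => x ^ q + (-1) * x = 0)) from
      Finset.filter_congr (fun x _ => by
        constructor <;> intro hh <;> linear_combination hh)]
    exact h
  have hIS : I ⊆ S := by
    intro y hy
    rw [hI, Finset.mem_image] at hy
    obtain ⟨x, _, rfl⟩ := hy
    exact hTS x
  have hIle : I.card ≤ q := le_trans (Finset.card_le_card hIS) hSle
  have hq0 : 0 < q := by omega
  have hIcard : I.card = q ∧ κ = q := by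
    rw [hK, sq] at hcount
    constructor
    · by_contra h
      have : I.card < q := lt_of_le_of_ne hIle h
      nlinarith
    · by_contra h
      have : κ < q := lt_of_le_of_ne hκle h
      nlinarith
  have hISeq : I = S := Finset.eq_of_subset_of_card_le hIS (by rw [hIcard.1]; exact hSle)
  -- now the multiset identity via counts
  ext y
  rw [Multiset.count_nsmul, Multiset.count_map]
  by_cases hy : y ∈ S
  · have hy' : y ∈ I := hISeq ▸ hy
    rw [hI, Finset.mem_image] at hy'
    obtain ⟨x₀, _, rfl⟩ := hy'
    have e1 : Multiset.filter (fun x => T x₀ = T x) Finset.univ.val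
        = (Finset.univ.filter (fun x : K => T x = T x₀)).val := by
      rw [Finset.filter_val]
      exact Multiset.filter_congr (fun x _ => eq_comm)
    rw [e1, ← Finset.card_def, hfib x₀, hIcard.2,
      Multiset.count_eq_one_of_mem S.nodup hy, mul_one]
  · have h1 : Multiset.filter (fun x => y = T x) Finset.univ.val = 0 := by
      rw [Multiset.filter_eq_nil]
      intro a _ h
      exact hy (h ▸ hTS a)
    rw [h1, Multiset.count_eq_zero_of_notMem hy, mul_zero]
    rfl



/-- For an additive `f : GF(q²) → GF(q²)`, the multiset of intersection numbers
`t(m,d)` of the curve `Tr(y + f(x)) = N(x)` with the lines `y = mx + d`,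
as `d` ranges over `GF(q²)`, does not depend on `m`; moreover each element of
this multiset occurs a multiple of `q` times. -/
theorem stmt1 (q : ℕ) (hq : IsPrimePow q)
    (K : Type) [Field K] [Fintype K] [DecidableEq K]
    (hK : Fintype.card K = q ^ 2)
    (f : K → K) (hf : ∀ x y : K, f (x + y) = f x + f y) :
    (∀ m m' : K,
      Finset.univ.val.map (fun d : K =>
        (Finset.univ.filter (fun x : K =>
          (m * x + d) ^ q + (m * x + d) + (f x) ^ q + f x = x ^ (q + 1))).card)
      =
      Finset.univ.val.map (fun d : K =>
        (Finset.univ.filter (fun x : K =>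
          (m' * x + d) ^ q + (m' * x + d) + (f x) ^ q + f x = x ^ (q + 1))).card))
    ∧
    (∀ m : K, ∀ n : ℕ,
      q ∣ Multiset.count n
        (Finset.univ.val.map (fun d : K =>
          (Finset.univ.filter (fun x : K =>
            (m * x + d) ^ q + (m * x + d) + (f x) ^ q + f x = x ^ (q + 1))).card))) := by
  classical
  have hq2 : 2 ≤ q := hq.two_le
  obtain ⟨p, k, hp0, hk, hpk⟩ := hq
  have hp : p.Prime := hp0.nat_prime
  have hq' : IsPrimePow q := ⟨p, k, hp0, hk, hpk⟩
  haveI : CharP K p := by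
    obtain ⟨n, hr, hcard⟩ := FiniteField.card K (ringChar K)
    have h1 : ringChar K ∣ p ^ (2 * k) := by
      rw [show p ^ (2*k) = q ^ 2 from by rw [← hpk]; ring, ← hK, hcard]
      exact dvd_pow_self _ (by positivity)
    have h2 : ringChar K = p :=
      (Nat.prime_dvd_prime_iff_eq hr hp).mp (hr.dvd_of_dvd_pow h1)
    exact h2 ▸ ringChar.charP K
  haveI := Fact.mk hp
  have hadd : ∀ a b : K, (a + b) ^ q = a ^ q + b ^ q := by
    intro a b
    rw [← hpk]
    exact add_pow_char_pow a b p k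
  have hpc : ∀ a : K, (a ^ q) ^ q = a := by
    intro a
    rw [← pow_mul, ← sq, ← hK, FiniteField.pow_card]
  have hq0 : q ≠ 0 := by omega
  -- surjectivity of the trace onto the fixed field
  have hsurj : ∀ c : K, c ^ q = c → ∃ e : K, e ^ q + e = c := by
    intro c hc
    have hmm := trace_fibers q K hq' hK hadd
    have h1 : c ∈ Finset.univ.val.map (fun x : K => x ^ q + x) := by
      rw [hmm, Multiset.mem_nsmul]
      exact ⟨hq0, by rw [← Finset.mem_def]; simp [hc]⟩
    obtain ⟨x, _, hx⟩ := Multiset.mem_map.mp h1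
    exact ⟨x, hx⟩
  set g : K → ℕ := fun s =>
    (Finset.univ.filter (fun u : K => u ^ q * u = (f u) ^ q + f u + s)).card with hg
  have hkey : ∀ m : K, ∃ e : K, ∀ d : K,
      (Finset.univ.filter (fun x : K =>
        (m * x + d) ^ q + (m * x + d) + (f x) ^ q + f x = x ^ (q + 1))).card
      = g ((d + e) ^ q + (d + e)) := by
    intro m
    have hc : ((f (m ^ q)) ^ q + f (m ^ q) + m ^ q * m) ^ q
        = (f (m ^ q)) ^ q + f (m ^ q) + m ^ q * m := by
      rw [hadd, hadd, hpc, mul_pow, hpc]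
      ring
    obtain ⟨e, he⟩ := hsurj _ hc
    refine ⟨e, fun d => ?_⟩
    have hiff : ∀ u : K,
        ((m * (u + m ^ q) + d) ^ q + (m * (u + m ^ q) + d) + (f (u + m ^ q)) ^ q + f (u + m ^ q)
          = (u + m ^ q) ^ (q + 1))
        ↔ (u ^ q * u = (f u) ^ q + f u + ((d + e) ^ q + (d + e))) := by
      intro u
      have h2 : f (u + m ^ q) = f u + f (m ^ q) := hf u _
      have e1 : (m * (u + m ^ q) + d) ^ q = m ^ q * u ^ q + m ^ q * m + d ^ q := by
        rw [show m * (u + m ^ q) + d = (m * u + m * m ^ q) + d from by ring, hadd, hadd,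
          mul_pow, mul_pow, hpc]
      have e3 : (u + m ^ q) ^ (q + 1) = (u ^ q + m) * (u + m ^ q) := by
        rw [pow_succ, hadd, hpc]
      have e4 : (d + e) ^ q = d ^ q + e ^ q := hadd d e
      rw [e1, e3, e4, h2, hadd]
      constructor <;> intro h <;> linear_combination -h - he
    apply Finset.card_nbij' (fun x => x - m ^ q) (fun u => u + m ^ q)
    · intro x hx
      simp only [Finset.mem_coe, Finset.mem_filter, Finset.mem_univ, true_and] at hx ⊢
      have hsub : x - m ^ q + m ^ q = x := sub_add_cancel x (m ^ q)
      have := (hiff (x - m ^ q))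
      rw [hsub] at this
      exact this.mp hx
    · intro u hu
      simp only [Finset.mem_coe, Finset.mem_filter, Finset.mem_univ, true_and] at hu ⊢
      exact (hiff u).mpr hu
    · intro x _; simp
    · intro u _; simp
  have huniv : ∀ e : K, Finset.univ.val.map (fun d : K => d + e) = Finset.univ.val := by
    intro e
    have h := congrArg Finset.val (Finset.map_univ_equiv (Equiv.addRight e))
    rw [Finset.map_val] at h
    exact h
  have main : ∀ m : K,
      Finset.univ.val.map (fun d : K =>
        (Finset.univ.filter (fun x : K =>
          (m * x + d) ^ q + (m * x + d) + (f x) ^ q + f x = x ^ (q + 1))).card)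
      = Finset.univ.val.map (fun z : K => g (z ^ q + z)) := by
    intro m
    obtain ⟨e, he⟩ := hkey m
    calc Finset.univ.val.map (fun d : K =>
        (Finset.univ.filter (fun x : K =>
          (m * x + d) ^ q + (m * x + d) + (f x) ^ q + f x = x ^ (q + 1))).card)
        = Finset.univ.val.map (fun d : K => g ((d + e) ^ q + (d + e))) :=
          Multiset.map_congr rfl (fun d _ => he d)
      _ = (Finset.univ.val.map (fun d : K => d + e)).map (fun z : K => g (z ^ q + z)) := by
          rw [Multiset.map_map]
          rfl
      _ = Finset.univ.val.map (fun z : K => g (z ^ q + z)) := by rw [huniv e]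
  constructor
  · intro m m'
    rw [main m, main m']
  · intro m n
    rw [main m]
    have h1 : Finset.univ.val.map (fun z : K => g (z ^ q + z))
        = Multiset.map g (Finset.univ.val.map (fun z : K => z ^ q + z)) := by
      rw [Multiset.map_map]
      rfl
    rw [h1, trace_fibers q K hq' hK hadd, Multiset.map_nsmul, Multiset.count_nsmul]
    exact Dvd.intro _ rfl
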